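/- Let 0 < β < 1. For all vectors x, y in ℝ^d with y ≠ 0 and x ≠ y, one has |y|^β + |x−y|^β ≥ |x|^β + (1−β)·(min(|y|, |x−y|))^β. -/

import Mathlib

open Real

lemma key_ineq {β a b : ℝ} (hβ0 : 0 < β) (hβ1 : β < 1) (ha : 0 < a) (hab : a ≤ b) :
    (a + b) ^ β ≤ β * a ^ β + b ^ β := by
  have hb : 0 < b := ha.trans_le hab
  have h1 : (0:ℝ) ≤ 1 + a / b := by positivity
  have e1 : (a + b) ^ β = b ^ β * (1 + a / b) ^ β := by
    rw [← Real.mul_rpow hb.le h1]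
    congr 1
    field_simp
    ring
  have bern : (1 + a / b) ^ β ≤ 1 + β * (a / b) := by
    have h : (0:ℝ) ≤ a / b := by positivity
    exact rpow_one_add_le_one_add_mul_self (by linarith) hβ0.le hβ1.le
  have h2 : b ^ β * (1 + β * (a / b)) = b ^ β + β * a * b ^ (β - 1) := by
    rw [Real.rpow_sub hb, Real.rpow_one]
    field_simp
  have h3 : b ^ (β - 1) ≤ a ^ (β - 1) :=
    Real.rpow_le_rpow_of_nonpos ha hab (by linarith)
  have h4 : β * a * b ^ (β - 1) ≤ β * a ^ β := by
    have : a * b ^ (β - 1) ≤ a * a ^ (β - 1) := by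
      exact mul_le_mul_of_nonneg_left h3 ha.le
    calc β * a * b ^ (β - 1) = β * (a * b ^ (β - 1)) := by ring
      _ ≤ β * (a * a ^ (β - 1)) := by exact mul_le_mul_of_nonneg_left this hβ0.le
      _ = β * a ^ β := by
          rw [← Real.rpow_one_add' ha.le (by intro h; linarith)]
          ring_nf
  calc (a + b) ^ β = b ^ β * (1 + a / b) ^ β := e1
    _ ≤ b ^ β * (1 + β * (a / b)) := by
        exact mul_le_mul_of_nonneg_left bern (Real.rpow_nonneg hb.le β)
    _ = b ^ β + β * a * b ^ (β - 1) := h2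
    _ ≤ β * a ^ β + b ^ β := by linarith

theorem stmt0 (d : ℕ) (β : ℝ) (hβ0 : 0 < β) (hβ1 : β < 1)
    (x y : EuclideanSpace ℝ (Fin d)) (hy : y ≠ 0) (hxy : x ≠ y) :
    ‖x‖ ^ β + (1 - β) * (min ‖y‖ ‖x - y‖) ^ β ≤ ‖y‖ ^ β + ‖x - y‖ ^ β := by
  set a := ‖y‖
  set b := ‖x - y‖
  have ha : 0 < a := norm_pos_iff.mpr hy
  have hb : 0 < b := norm_pos_iff.mpr (sub_ne_zero.mpr hxy)
  have hx : ‖x‖ ≤ a + b := by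
    calc ‖x‖ = ‖(x - y) + y‖ := by rw [sub_add_cancel]
      _ ≤ b + a := norm_add_le _ _
      _ = a + b := by ring
  have hm : 0 < min a b := lt_min ha hb
  have key : (min a b + max a b) ^ β ≤ β * (min a b) ^ β + (max a b) ^ β :=
    key_ineq hβ0 hβ1 hm (min_le_max)
  have hx2 : ‖x‖ ^ β ≤ (min a b + max a b) ^ β := by
    apply Real.rpow_le_rpow (norm_nonneg x) _ hβ0.le
    rw [min_add_max]
    exact hx
  have hsplit : a ^ β + b ^ β = (min a b) ^ β + (max a b) ^ β := by
    rcases le_total a b with h | h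
    · rw [min_eq_left h, max_eq_right h]
    · rw [min_eq_right h, max_eq_left h]; ring
  nlinarith [key, hx2, hsplit]
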